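/- Assume b = 0. Then h(0) = 0, the first derivative of h at 0 equals a·μ₀ − d, the second derivative of h at 0 equals 0, and the third derivative of h at 0 equals 6·a·k − 2·a³·μ₀³. -/

import Mathlib

open Real

lemma snod_aux (c5 c3 c1 d : ℝ) :
    (fun z : ℝ => -d * z + Real.tanh (c5*z^5 + c3*z^3 + c1*z)) 0 = 0 ∧
    iteratedDeriv 1 (fun z : ℝ => -d * z + Real.tanh (c5*z^5 + c3*z^3 + c1*z)) 0 = c1 - d ∧
    iteratedDeriv 2 (fun z : ℝ => -d * z + Real.tanh (c5*z^5 + c3*z^3 + c1*z)) 0 = 0 ∧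
    iteratedDeriv 3 (fun z : ℝ => -d * z + Real.tanh (c5*z^5 + c3*z^3 + c1*z)) 0
      = 6 * c3 - 2 * c1 ^ 3 := by
  set P : ℝ → ℝ := fun z => c5*z^5 + c3*z^3 + c1*z with hPdef
  set P1 : ℝ → ℝ := fun z => 5*c5*z^4 + 3*c3*z^2 + c1 with hP1def
  set P2 : ℝ → ℝ := fun z => 20*c5*z^3 + 6*c3*z with hP2def
  have hP : ∀ x : ℝ, HasDerivAt P (P1 x) x := by
    intro x
    have h := (((hasDerivAt_pow 5 x).const_mul c5).add ((hasDerivAt_pow 3 x).const_mul c3)).add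
      ((hasDerivAt_id x).const_mul c1)
    refine h.congr_deriv ?_
    simp only [hP1def]; push_cast; ring
  have hP1 : ∀ x : ℝ, HasDerivAt P1 (P2 x) x := by
    intro x
    have h := (((hasDerivAt_pow 4 x).const_mul (5*c5)).add
      ((hasDerivAt_pow 2 x).const_mul (3*c3))).add (hasDerivAt_const x c1)
    refine h.congr_deriv ?_
    simp only [hP2def]; push_cast; ring
  have hP2' : ∀ x : ℝ, HasDerivAt P2 (60*c5*x^2 + 6*c3) x := by
    intro x
    have h := ((hasDerivAt_pow 3 x).const_mul (20*c5)).add ((hasDerivAt_id x).const_mul (6*c3))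
    refine h.congr_deriv ?_
    push_cast; ring
  have hC : ∀ x : ℝ, HasDerivAt (fun y => Real.cosh (P y)) (Real.sinh (P x) * P1 x) x :=
    fun x => (Real.hasDerivAt_cosh (P x)).comp x (hP x)
  have hS : ∀ x : ℝ, HasDerivAt (fun y => Real.sinh (P y)) (Real.cosh (P x) * P1 x) x :=
    fun x => (Real.hasDerivAt_sinh (P x)).comp x (hP x)
  have hCpos : ∀ x : ℝ, Real.cosh (P x) ≠ 0 := fun x => (Real.cosh_pos (P x)).ne'
  have hFun : (fun z : ℝ => -d * z + Real.tanh (c5*z^5 + c3*z^3 + c1*z))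
      = fun z => -d * z + Real.sinh (P z) / Real.cosh (P z) := by
    funext z
    rw [Real.tanh_eq_sinh_div_cosh]
  rw [hFun]
  set F : ℝ → ℝ := fun z => -d * z + Real.sinh (P z) / Real.cosh (P z) with hFdef
  set F1 : ℝ → ℝ := fun x => -d + P1 x / Real.cosh (P x) ^ 2 with hF1def
  have hF : ∀ x : ℝ, HasDerivAt F (F1 x) x := by
    intro x
    have h := ((hasDerivAt_id x).const_mul (-d)).add ((hS x).div (hC x) (hCpos x))
    refine h.congr_deriv ?_
    have key : Real.cosh (P x) ^ 2 - Real.sinh (P x) ^ 2 = 1 := Real.cosh_sq_sub_sinh_sq (P x)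
    simp only [hF1def, mul_one]
    rw [show Real.cosh (P x) * P1 x * Real.cosh (P x)
        - Real.sinh (P x) * (Real.sinh (P x) * P1 x)
        = P1 x * (Real.cosh (P x) ^ 2 - Real.sinh (P x) ^ 2) from by ring, key, mul_one]
  have hdF : deriv F = F1 := funext fun x => (hF x).deriv
  set F2 : ℝ → ℝ := fun x =>
      (P2 x * Real.cosh (P x) ^ 2
        - P1 x * ((2:ℝ) * Real.cosh (P x) ^ 1 * (Real.sinh (P x) * P1 x)))
      / (Real.cosh (P x) ^ 2) ^ 2 with hF2def
  have hCsq : ∀ x : ℝ, HasDerivAt (fun y => Real.cosh (P y) ^ 2)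
      ((2:ℝ) * Real.cosh (P x) ^ 1 * (Real.sinh (P x) * P1 x)) x := by
    intro x
    have h := (hC x).pow 2
    exact h.congr_deriv (by norm_num)
  have hF1' : ∀ x : ℝ, HasDerivAt F1 (F2 x) x := by
    intro x
    have h := (hasDerivAt_const x (-d)).add
      ((hP1 x).div (hCsq x) (by positivity))
    refine h.congr_deriv ?_
    simp only [hF2def]
    rw [zero_add]
  have hdF1 : deriv F1 = F2 := funext fun x => (hF1' x).deriv
  -- derivative of F2 at 0
  have hinner : HasDerivAt (fun x => (2:ℝ) * Real.cosh (P x) ^ 1 * (Real.sinh (P x) * P1 x))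
      (((2:ℝ) * ((1:ℕ) * Real.cosh (P 0) ^ 0 * (Real.sinh (P 0) * P1 0)))
          * (Real.sinh (P 0) * P1 0)
        + (2:ℝ) * Real.cosh (P 0) ^ 1
          * (Real.cosh (P 0) * P1 0 * P1 0 + Real.sinh (P 0) * P2 0)) 0 := by
    exact (((hC 0).pow 1).const_mul 2).mul ((hS 0).mul (hP1 0))
  have hN := ((hP2' 0).mul (hCsq 0)).sub ((hP1 0).mul hinner)
  have hD := (hCsq 0).pow 2
  have hF2at0 := hN.div hD (by simp only [Pi.pow_apply]; positivity)
  -- evaluations at 0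
  have hP0 : P 0 = 0 := by simp [hPdef]
  have hP10 : P1 0 = c1 := by simp [hP1def]
  have hP20 : P2 0 = 0 := by simp [hP2def]
  refine ⟨by simp [hFdef, hP0], ?_, ?_, ?_⟩
  · rw [iteratedDeriv_one, hdF]
    simp only [hF1def, hP0, hP10, Real.cosh_zero, one_pow, div_one]
    ring
  · rw [iteratedDeriv_succ, iteratedDeriv_one, hdF, hdF1]
    simp [hF2def, hP0, hP10, hP20]
  · rw [iteratedDeriv_succ, iteratedDeriv_succ, iteratedDeriv_one, hdF, hdF1,
      (show deriv F2 0 = _ from hF2at0.deriv)]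
    simp only [hP0, hP10, hP20, Real.cosh_zero, Real.sinh_zero]
    norm_num
    rw [hP0, Real.cosh_zero]
    ring

/-- Assume `b = 0` and let
`h(z) = −d·z + tanh(a·z·(−kₛ·z⁴ + k·z² + μ₀))`. Then `h(0) = 0`, the first
derivative of `h` at `0` equals `a·μ₀ − d`, the second derivative of `h` at `0`
equals `0`, and the third derivative of `h` at `0` equals `6·a·k − 2·a³·μ₀³`. -/
theorem snod_h_derivatives_at_zero
    (a d k ks ε μ0 : ℝ)
    (ha : 0 < a) (hd : 0 < d) (hk : 0 < k) (hks : 0 < ks) (hε : 0 < ε) (hμ0 : 0 < μ0)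
    (h : ℝ → ℝ)
    (hh : h = fun z => -d * z + Real.tanh (a * z * (-ks * z ^ 4 + k * z ^ 2 + μ0))) :
    h 0 = 0 ∧
    iteratedDeriv 1 h 0 = a * μ0 - d ∧
    iteratedDeriv 2 h 0 = 0 ∧
    iteratedDeriv 3 h 0 = 6 * a * k - 2 * a ^ 3 * μ0 ^ 3 := by
  have heq : h = fun z : ℝ =>
      -d * z + Real.tanh ((-(a*ks))*z^5 + (a*k)*z^3 + (a*μ0)*z) := by
    rw [hh]
    funext z
    congr 1
    ring_nf
  rw [heq]
  obtain ⟨h0, h1, h2, h3⟩ := snod_aux (-(a*ks)) (a*k) (a*μ0) d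
  exact ⟨h0, h1, h2, by rw [h3]; ring⟩
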